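/- Let P be an invertible n×n real matrix. Then the function M ↦ log(det M) on n×n real matrices is differentiable at P with derivative A ↦ trace(P⁻¹ · A); i.e. HasFDerivAt (fun M => Real.log M.det) (fun A => (P⁻¹ * A).trace) P. -/

import Mathlib

attribute [local instance] Matrix.normedAddCommGroup Matrix.normedSpace

open Matrix

/-- The determinant as a continuous multilinear map in the rows. -/
noncomputable def detCMM (n : ℕ) :
    ContinuousMultilinearMap ℝ (fun _ : Fin n => (Fin n → ℝ)) ℝ :=
  MultilinearMap.mkContinuous
    (Matrix.detRowAlternating : (Fin n → ℝ) [⋀^Fin n]→ₗ[ℝ] ℝ).toMultilinearMap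
    (Nat.factorial n) <| by
      intro m
      rw [AlternatingMap.coe_multilinearMap]
      have hdet : (Matrix.detRowAlternating (R := ℝ) m) = (Matrix.of m).det := rfl
      rw [hdet, Matrix.det_apply]
      calc ‖∑ σ : Equiv.Perm (Fin n), Equiv.Perm.sign σ •
              ∏ i, Matrix.of m (σ i) i‖
          ≤ ∑ σ : Equiv.Perm (Fin n), ‖Equiv.Perm.sign σ •
              ∏ i, Matrix.of m (σ i) i‖ := norm_sum_le _ _
        _ ≤ ∑ _σ : Equiv.Perm (Fin n), ∏ i, ‖m i‖ := by
            refine Finset.sum_le_sum fun σ _ => ?_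
            have h1 : ‖Equiv.Perm.sign σ • ∏ i, Matrix.of m (σ i) i‖
                = ‖∏ i, m (σ i) i‖ := by
              rcases Int.units_eq_one_or (Equiv.Perm.sign σ) with h | h <;>
                simp [h, Units.smul_def]
            rw [h1]
            calc ‖∏ i, m (σ i) i‖ ≤ ∏ i, ‖m (σ i)‖ := by
                  rw [Real.norm_eq_abs, Finset.abs_prod]
                  exact Finset.prod_le_prod (fun i _ => abs_nonneg _)
                    (fun i _ => norm_le_pi_norm (m (σ i)) i)
              _ = ∏ i, ‖m i‖ := Equiv.prod_comp σ fun i => ‖m i‖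
        _ = (Nat.factorial n) * ∏ i, ‖m i‖ := by
            rw [Finset.sum_const, Finset.card_univ, Fintype.card_perm,
              Fintype.card_fin, nsmul_eq_mul]

theorem detCMM_apply (n : ℕ) (M : Matrix (Fin n) (Fin n) ℝ) :
    detCMM n M = M.det := rfl

theorem sum_det_updateRow (n : ℕ) (P A : Matrix (Fin n) (Fin n) ℝ) :
    ∑ i, (P.updateRow i (A i)).det = ((adjugate P) * A).trace := by
  have key : ∀ i, (P.updateRow i (A i)).det = ∑ j, adjugate P j i * A i j := by
    intro i
    rw [← cramer_transpose_apply]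
    conv_lhs => rw [show (A i) = ∑ j, Pi.single j (A i j) from
      (Finset.univ_sum_single (A i)).symm, map_sum]
    simp only [Finset.sum_apply]
    refine Finset.sum_congr rfl fun j _ => ?_
    have hsingle : (Pi.single j (A i j) : Fin n → ℝ)
        = (A i j) • (Pi.single j (1 : ℝ) : Fin n → ℝ) := by
      rw [← Pi.single_smul, smul_eq_mul, mul_one]
    rw [hsingle, _root_.map_smul, Pi.smul_apply, smul_eq_mul, cramer_transpose_apply,
      ← adjugate_apply, mul_comm]
  rw [Matrix.trace]
  simp only [key, Matrix.diag_apply, Matrix.mul_apply]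
  rw [Finset.sum_comm]

/-- For an invertible `n × n` real matrix `P`, the function `M ↦ log (det M)` is
differentiable at `P` with derivative `A ↦ trace(P⁻¹ · A)`. -/
theorem hasFDerivAt_log_det (n : ℕ) (P : Matrix (Fin n) (Fin n) ℝ) (hP : IsUnit P.det) :
    HasFDerivAt (fun M : Matrix (Fin n) (Fin n) ℝ => Real.log M.det)
      (LinearMap.toContinuousLinearMap
        ((Matrix.traceLinearMap (Fin n) ℝ ℝ).comp (LinearMap.mulLeft ℝ P⁻¹))) P := by
  have hdet : P.det ≠ 0 := hP.ne_zero
  have hdetF : HasFDerivAt (fun M : Matrix (Fin n) (Fin n) ℝ => M.det)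
      ((detCMM n).linearDeriv P) P := (detCMM n).hasFDerivAt (x := P)
  have hlog : HasDerivAt Real.log (P.det)⁻¹ P.det := Real.hasDerivAt_log hdet
  have h := hlog.comp_hasFDerivAt P hdetF
  refine h.congr_fderiv ?_
  ext A
  change P.det⁻¹ * ((detCMM n).linearDeriv P) A = (P⁻¹ * A).trace
  have hld : ((detCMM n).linearDeriv P) A
      = ∑ i, (P.updateRow i (A i)).det := by
    refine (ContinuousMultilinearMap.linearDeriv_apply (detCMM n) P A).trans ?_
    refine Finset.sum_congr rfl fun i _ => ?_
    rw [show Function.update P i (A i) = P.updateRow i (A i) from rfl, detCMM_apply]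
  rw [Matrix.inv_def, Matrix.smul_mul, Matrix.trace_smul, smul_eq_mul,
    Ring.inverse_eq_inv, ← sum_det_updateRow]
  exact congrArg (fun t => P.det⁻¹ * t) hld
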